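/- arXiv:2408.09528 — 3 statements merged into one kernel-verified Lean document; each statement's English description precedes it below -/
import Mathlib

section
/- Let n ≥ 1, 0 < p ≤ 1 < p₀ < ∞ and let L be an integer with L ≥ d_p := ⌊n(1/p − 1)⌋. Let a : ℤⁿ → ℝ be a (p, p₀, L)-atom and define â(x) := ∑_{j ∈ ℤⁿ} a(j) e^{2πi (j·x)} for x ∈ ℝⁿ. Then for every x ∈ ℝⁿ with |x| ≤ √n one has |â(x)| ≤ (2π)^{L+1} |x|^{L+1} ∑_{j ∈ ℤⁿ} |a(j)| |j|^{L+1} e^{2π√n |j|}. -/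
open scoped ENNReal NNReal BigOperators
open Filter
open scoped Nat

/-- Euclidean norm of a lattice point `j ∈ ℤⁿ`. -/
noncomputable def znorm {n : ℕ} (j : Fin n → ℤ) : ℝ := Real.sqrt (∑ i, ((j i : ℝ))^2)

/-- `ℓ^s` norm (`0 < s < ∞`) of a sequence on `ℤⁿ`, valued in `ℝ≥0∞`. -/
noncomputable def ellNormF {n : ℕ} (s : ℝ) (b : (Fin n → ℤ) → ℝ) : ℝ≥0∞ :=
  (∑' j, (‖b j‖₊ : ℝ≥0∞) ^ s) ^ (1/s)

/-- `ℓ^s` norm for an extended exponent `s ∈ (0,∞]`. -/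
noncomputable def ellNorm {n : ℕ} (s : ℝ≥0∞) (b : (Fin n → ℤ) → ℝ) : ℝ≥0∞ :=
  if s = ∞ then ⨆ j, (‖b j‖₊ : ℝ≥0∞) else ellNormF s.toReal b

/-- `d_p = ⌊n(1/p − 1)⌋`. -/
noncomputable def dp (n : ℕ) (p : ℝ) : ℕ := Nat.floor ((n : ℝ) * (1/p - 1))

/-- `a : ℤⁿ → ℝ` is a `(p, p₀, L)`-atom centered at the discrete cube
`Q = {j : |j − m₀|_∞ ≤ N}` (whose cardinality is `(2N+1)ⁿ`); here `p₀ ∈ (1,∞]` and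
`1/p₀` is interpreted as `0` when `p₀ = ∞`. -/
def IsDiscreteAtom {n : ℕ} (p : ℝ) (p₀ : ℝ≥0∞) (L : ℕ) (m₀ : Fin n → ℤ) (N : ℕ)
    (a : (Fin n → ℤ) → ℝ) : Prop :=
  (∀ j : Fin n → ℤ, ¬ (∀ i, |j i - m₀ i| ≤ (N : ℤ)) → a j = 0) ∧
  ellNorm p₀ a ≤ (((2*N+1)^n : ℕ) : ℝ≥0∞) ^ (1/p₀.toReal - 1/p) ∧
  ∀ β : Fin n → ℕ, (∑ i, β i) ≤ L →
    ∑' j : Fin n → ℤ, (∏ i, ((j i : ℝ)) ^ β i) * a j = 0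

lemma exp_taylor_tail_bound (z : ℂ) (m : ℕ) :
    ‖Complex.exp z - ∑ k ∈ Finset.range m, z ^ k / (k ! : ℂ)‖ ≤ ‖z‖ ^ m * Real.exp ‖z‖ := by
  have hz : HasSum (fun k : ℕ => z ^ k / k !) (Complex.exp z) := by
    rw [Complex.exp_eq_exp_ℂ]; exact NormedSpace.expSeries_div_hasSum_exp z
  have htail : HasSum (fun k : ℕ => z ^ (k + m) / ((k + m)! : ℂ))
      (Complex.exp z - ∑ k ∈ Finset.range m, z ^ k / k !) :=
    (hasSum_nat_add_iff' m).mpr hz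
  have hg : Summable (fun k : ℕ => ‖z‖ ^ m * (‖z‖ ^ k / k !)) :=
    (Real.summable_pow_div_factorial ‖z‖).mul_left _
  have hbound : ∀ k : ℕ, ‖z ^ (k + m) / ((k + m)! : ℂ)‖ ≤ ‖z‖ ^ m * (‖z‖ ^ k / k !) := by
    intro k
    rw [norm_div, norm_pow]
    have h1 : ‖((k + m)! : ℂ)‖ = ((k + m)! : ℝ) := by
      simp [Complex.norm_natCast]
    rw [h1, pow_add]
    rw [div_le_iff₀ (by positivity)]
    have hfac : (k ! : ℝ) ≤ ((k + m)! : ℝ) := by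
      exact_mod_cast Nat.factorial_le (Nat.le_add_right k m)
    calc ‖z‖ ^ k * ‖z‖ ^ m = (‖z‖ ^ m * (‖z‖ ^ k / k !)) * k ! := by
            field_simp
      _ ≤ (‖z‖ ^ m * (‖z‖ ^ k / k !)) * (k + m)! := by
            apply mul_le_mul_of_nonneg_left hfac (by positivity)
  have hnorm_summable : Summable (fun k : ℕ => ‖z ^ (k + m) / ((k + m)! : ℂ)‖) :=
    Summable.of_nonneg_of_le (fun k => norm_nonneg _) hbound hg
  calc ‖Complex.exp z - ∑ k ∈ Finset.range m, z ^ k / (k ! : ℂ)‖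
      = ‖∑' k : ℕ, z ^ (k + m) / ((k + m)! : ℂ)‖ := by rw [htail.tsum_eq]
    _ ≤ ∑' k : ℕ, ‖z ^ (k + m) / ((k + m)! : ℂ)‖ := norm_tsum_le_tsum_norm hnorm_summable
    _ ≤ ∑' k : ℕ, ‖z‖ ^ m * (‖z‖ ^ k / k !) := Summable.tsum_le_tsum hbound hnorm_summable hg
    _ = ‖z‖ ^ m * ∑' k : ℕ, ‖z‖ ^ k / k ! := tsum_mul_left
    _ = ‖z‖ ^ m * Real.exp ‖z‖ := by
        congr 1
        have : HasSum (fun k : ℕ => ‖z‖ ^ k / k !) (Real.exp ‖z‖) := by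
          rw [Real.exp_eq_exp_ℝ]; exact NormedSpace.expSeries_div_hasSum_exp ‖z‖
        exact this.tsum_eq

/-- Estimate `|â(x)| ≤ (2π)^{L+1} |x|^{L+1} ∑_j |a(j)| |j|^{L+1} e^{2π√n|j|}`
for `|x| ≤ √n`, where `â(x) = ∑_j a(j) e^{2πi j·x}` and `a` is a `(p,p₀,L)`-atom. -/
theorem abs_fourier_atom_le (n : ℕ) (hn : 1 ≤ n) (p p₀ : ℝ) (hp0 : 0 < p) (hp1 : p ≤ 1)
    (hp₀1 : 1 < p₀) (L : ℕ) (hL : dp n p ≤ L) (m₀ : Fin n → ℤ) (N : ℕ)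
    (a : (Fin n → ℤ) → ℝ) (ha : IsDiscreteAtom p (ENNReal.ofReal p₀) L m₀ N a)
    (x : EuclideanSpace ℝ (Fin n)) (hx : ‖x‖ ≤ Real.sqrt n) :
    ‖∑' j : Fin n → ℤ,
        (a j : ℂ) * Complex.exp (2 * Real.pi * Complex.I * ((∑ i, (j i : ℝ) * x i : ℝ) : ℂ))‖
      ≤ (2 * Real.pi) ^ (L + 1) * ‖x‖ ^ (L + 1) *
          ∑' j : Fin n → ℤ,
            |a j| * znorm j ^ (L + 1) * Real.exp (2 * Real.pi * Real.sqrt n * znorm j) := by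
  obtain ⟨hsupp, -, hmom⟩ := ha
  set S : Finset (Fin n → ℤ) :=
    Fintype.piFinset (fun i => Finset.Icc (m₀ i - N) (m₀ i + N)) with hSdef
  have hmemS : ∀ j : Fin n → ℤ, j ∉ S → a j = 0 := by
    intro j hj
    apply hsupp
    intro hall
    apply hj
    rw [hSdef, Fintype.mem_piFinset]
    intro i
    rw [Finset.mem_Icc]
    have := hall i
    rw [abs_le] at this
    omega
  -- abbreviations
  set t : (Fin n → ℤ) → ℝ := fun j => ∑ i, (j i : ℝ) * x i with htdef
  set z : (Fin n → ℤ) → ℂ := fun j => 2 * Real.pi * Complex.I * ((t j : ℝ) : ℂ) with hzdef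
  -- rewrite both tsums as finite sums over S
  have hLHS : (∑' j : Fin n → ℤ, (a j : ℂ) *
        Complex.exp (2 * Real.pi * Complex.I * ((∑ i, (j i : ℝ) * x i : ℝ) : ℂ)))
      = ∑ j ∈ S, (a j : ℂ) * Complex.exp (z j) :=
    tsum_eq_sum (fun j hj => by rw [hmemS j hj]; simp)
  have hRHS : (∑' j : Fin n → ℤ,
        |a j| * znorm j ^ (L + 1) * Real.exp (2 * Real.pi * Real.sqrt n * znorm j))
      = ∑ j ∈ S, |a j| * znorm j ^ (L + 1) * Real.exp (2 * Real.pi * Real.sqrt n * znorm j) :=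
    tsum_eq_sum (fun j hj => by rw [hmemS j hj]; simp)
  rw [hLHS, hRHS]
  -- moments on S
  have hmomS : ∀ β : Fin n → ℕ, (∑ i, β i) ≤ L →
      ∑ j ∈ S, (∏ i, ((j i : ℝ)) ^ β i) * a j = 0 := by
    intro β hβ
    rw [← tsum_eq_sum (L := SummationFilter.unconditional _) (f := fun j => (∏ i, ((j i : ℝ)) ^ β i) * a j)
        (fun j hj => by simp [hmemS j hj])]
    exact hmom β hβ
  -- vanishing of ∑ a j * (t j)^k for k ≤ L
  have hpow : ∀ k : ℕ, k ≤ L → ∑ j ∈ S, a j * (t j) ^ k = 0 := by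
    intro k hk
    have expand : ∀ j : Fin n → ℤ, (t j) ^ k
        = ∑ β ∈ Finset.piAntidiag Finset.univ k,
            ((Nat.multinomial Finset.univ β : ℝ) * ∏ i, (x i) ^ β i)
              * ∏ i, ((j i : ℝ)) ^ β i := by
      intro j
      rw [htdef]
      simp only
      rw [Finset.sum_pow_eq_sum_piAntidiag]
      refine Finset.sum_congr rfl fun β _ => ?_
      have : ∏ i, ((j i : ℝ) * x i) ^ β i
          = (∏ i, ((j i : ℝ)) ^ β i) * ∏ i, (x i) ^ β i := by
        rw [← Finset.prod_mul_distrib]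
        exact Finset.prod_congr rfl fun i _ => mul_pow _ _ _
      rw [this]
      ring
    simp_rw [expand, Finset.mul_sum]
    rw [Finset.sum_comm]
    refine Finset.sum_eq_zero fun β hβ => ?_
    have hβL : (∑ i, β i) ≤ L :=
      le_trans (le_of_eq ((Finset.mem_piAntidiag.1 hβ).1)) hk
    have h0 := hmomS β hβL
    calc ∑ j ∈ S, a j * (((Nat.multinomial Finset.univ β : ℝ) * ∏ i, (x i) ^ β i)
            * ∏ i, ((j i : ℝ)) ^ β i)
        = ((Nat.multinomial Finset.univ β : ℝ) * ∏ i, (x i) ^ β i)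
            * ∑ j ∈ S, (∏ i, ((j i : ℝ)) ^ β i) * a j := by
          rw [Finset.mul_sum]
          exact Finset.sum_congr rfl fun j _ => by ring
      _ = 0 := by rw [h0, mul_zero]
  -- vanishing of the Taylor parts
  have hT : ∑ j ∈ S, (a j : ℂ) * ∑ k ∈ Finset.range (L+1), (z j) ^ k / (k ! : ℂ) = 0 := by
    simp_rw [Finset.mul_sum]
    rw [Finset.sum_comm]
    refine Finset.sum_eq_zero fun k hk => ?_
    have hkL : k ≤ L := Nat.lt_succ_iff.1 (Finset.mem_range.1 hk)
    have h0C : ∑ j ∈ S, (a j : ℂ) * ((t j : ℝ) : ℂ) ^ k = 0 := by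
      have : ((∑ j ∈ S, a j * (t j) ^ k : ℝ) : ℂ) = 0 := by
        rw [hpow k hkL]; norm_num
      rw [← this]
      push_cast
      rfl
    calc ∑ j ∈ S, (a j : ℂ) * ((z j) ^ k / (k ! : ℂ))
        = ((2 * Real.pi * Complex.I) ^ k / (k ! : ℂ))
            * ∑ j ∈ S, (a j : ℂ) * ((t j : ℝ) : ℂ) ^ k := by
          rw [Finset.mul_sum]
          refine Finset.sum_congr rfl fun j _ => ?_
          rw [hzdef]
          simp only
          rw [mul_pow]
          ring
      _ = 0 := by rw [h0C, mul_zero]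
  -- subtract the Taylor polynomial
  have key : ∑ j ∈ S, (a j : ℂ) * Complex.exp (z j)
      = ∑ j ∈ S, (a j : ℂ) *
          (Complex.exp (z j) - ∑ k ∈ Finset.range (L+1), (z j) ^ k / (k ! : ℂ)) := by
    simp_rw [mul_sub]
    rw [Finset.sum_sub_distrib, hT, sub_zero]
  -- Cauchy–Schwarz
  have hxnorm : ‖x‖ = Real.sqrt (∑ i, (x i) ^ 2) := by
    rw [EuclideanSpace.norm_eq]
    congr 1
    exact Finset.sum_congr rfl fun i _ => by rw [Real.norm_eq_abs, sq_abs]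
  have hCS : ∀ j : Fin n → ℤ, |t j| ≤ znorm j * ‖x‖ := by
    intro j
    rw [hxnorm, znorm, abs_le]
    constructor
    · have h' : -∑ i, (j i : ℝ) * x i ≤ Real.sqrt (∑ i, ((j i : ℝ)) ^ 2)
          * Real.sqrt (∑ i, (x i) ^ 2) := by
        calc -∑ i, (j i : ℝ) * x i = ∑ i, -((j i : ℝ)) * x i := by
              rw [← Finset.sum_neg_distrib]
              exact Finset.sum_congr rfl fun i _ => by ring
          _ ≤ Real.sqrt (∑ i, (-((j i : ℝ))) ^ 2) * Real.sqrt (∑ i, (x i) ^ 2) :=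
              Real.sum_mul_le_sqrt_mul_sqrt _ _ _
          _ = Real.sqrt (∑ i, ((j i : ℝ)) ^ 2) * Real.sqrt (∑ i, (x i) ^ 2) := by
              congr 2
              exact Finset.sum_congr rfl fun i _ => by ring
      linarith [h']
    · exact Real.sum_mul_le_sqrt_mul_sqrt Finset.univ (fun i => ((j i : ℝ))) (fun i => x i)
  have hzn : ∀ j : Fin n → ℤ, ‖z j‖ = 2 * Real.pi * |t j| := by
    intro j
    rw [hzdef]
    simp only
    rw [norm_mul, norm_mul, Complex.norm_I, mul_one, norm_mul]
    simp [Complex.norm_real, Real.norm_eq_abs, abs_of_pos Real.pi_pos]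
  have hznn : ∀ j : Fin n → ℤ, (0:ℝ) ≤ znorm j := fun j => Real.sqrt_nonneg _
  have hxn : (0:ℝ) ≤ ‖x‖ := norm_nonneg x
  -- per-term bound and conclusion
  calc ‖∑ j ∈ S, (a j : ℂ) * Complex.exp (z j)‖
      = ‖∑ j ∈ S, (a j : ℂ) *
          (Complex.exp (z j) - ∑ k ∈ Finset.range (L+1), (z j) ^ k / (k ! : ℂ))‖ := by rw [key]
    _ ≤ ∑ j ∈ S, ‖(a j : ℂ) *
          (Complex.exp (z j) - ∑ k ∈ Finset.range (L+1), (z j) ^ k / (k ! : ℂ))‖ :=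
        norm_sum_le _ _
    _ ≤ ∑ j ∈ S, (2 * Real.pi) ^ (L + 1) * ‖x‖ ^ (L + 1) *
          (|a j| * znorm j ^ (L + 1) * Real.exp (2 * Real.pi * Real.sqrt n * znorm j)) := by
        refine Finset.sum_le_sum fun j _ => ?_
        rw [norm_mul, Complex.norm_real, Real.norm_eq_abs]
        have h1 := exp_taylor_tail_bound (z j) (L+1)
        have hz_le : ‖z j‖ ≤ 2 * Real.pi * ‖x‖ * znorm j := by
          rw [hzn j]
          calc 2 * Real.pi * |t j| ≤ 2 * Real.pi * (znorm j * ‖x‖) := by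
                apply mul_le_mul_of_nonneg_left (hCS j)
                positivity
            _ = 2 * Real.pi * ‖x‖ * znorm j := by ring
        have hz_le' : ‖z j‖ ≤ 2 * Real.pi * Real.sqrt n * znorm j := by
          refine hz_le.trans ?_
          have := mul_le_mul_of_nonneg_left hx (by positivity : (0:ℝ) ≤ 2 * Real.pi)
          calc 2 * Real.pi * ‖x‖ * znorm j ≤ 2 * Real.pi * Real.sqrt n * znorm j := by
                apply mul_le_mul_of_nonneg_right _ (hznn j)
                exact this
            _ = _ := rfl
        calc |a j| * ‖Complex.exp (z j) - ∑ k ∈ Finset.range (L+1), (z j) ^ k / (k ! : ℂ)‖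
            ≤ |a j| * (‖z j‖ ^ (L+1) * Real.exp ‖z j‖) :=
              mul_le_mul_of_nonneg_left h1 (abs_nonneg _)
          _ ≤ |a j| * ((2 * Real.pi * ‖x‖ * znorm j) ^ (L+1)
                * Real.exp (2 * Real.pi * Real.sqrt n * znorm j)) := by
              apply mul_le_mul_of_nonneg_left _ (abs_nonneg _)
              apply mul_le_mul
              · exact pow_le_pow_left₀ (norm_nonneg _) hz_le _
              · exact Real.exp_le_exp.2 hz_le'
              · exact (Real.exp_pos _).le
              · exact pow_nonneg (mul_nonneg (by positivity) (hznn j)) _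
          _ = (2 * Real.pi) ^ (L + 1) * ‖x‖ ^ (L + 1) *
                (|a j| * znorm j ^ (L + 1) * Real.exp (2 * Real.pi * Real.sqrt n * znorm j)) := by
              rw [mul_pow, mul_pow]
              ring
    _ = (2 * Real.pi) ^ (L + 1) * ‖x‖ ^ (L + 1) *
          ∑ j ∈ S, |a j| * znorm j ^ (L + 1) *
            Real.exp (2 * Real.pi * Real.sqrt n * znorm j) := by
        rw [Finset.mul_sum]
end

section
/- Let n ≥ 1, 0 < p ≤ 1 < p₀ ≤ ∞, let L be an integer with L ≥ d_p := ⌊n(1/p − 1)⌋, and let r > 1/p − 1/p₀. Then there exists a constant C > 0, depending only on n, p, p₀, r, L, such that every (p, p₀, L)-atom a centered at a discrete cube Q is, for every m₀ ∈ Q, a (p, p₀, r, d_p)-molecule centered at m₀ with molecule norm N(a) ≤ C. -/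
open scoped ENNReal NNReal BigOperators
open Filter

/-- The `(p, p₀, r)` molecule norm `N(M) = ‖M‖_{p₀}^{1−θ} ‖|·−m₀|^{nr} M‖_{p₀}^{θ}` with
`θ = (1/p − 1/p₀)/r` (and `1/p₀ = 0` when `p₀ = ∞`). -/
noncomputable def molNorm {n : ℕ} (p : ℝ) (p₀ : ℝ≥0∞) (r : ℝ) (m₀ : Fin n → ℤ)
    (M : (Fin n → ℤ) → ℝ) : ℝ≥0∞ :=
  ellNorm p₀ M ^ (1 - (1/p - 1/p₀.toReal)/r) *
    ellNorm p₀ (fun j => znorm (j - m₀) ^ ((n : ℝ)*r) * M j) ^ ((1/p - 1/p₀.toReal)/r)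

/-- `M : ℤⁿ → ℝ` is a `(p, p₀, r, d)`-molecule centered at `m₀`: the molecule norm is finite
and all moments of order `≤ d` vanish (with absolutely convergent series). -/
def IsDiscreteMolecule {n : ℕ} (p : ℝ) (p₀ : ℝ≥0∞) (r : ℝ) (d : ℕ) (m₀ : Fin n → ℤ)
    (M : (Fin n → ℤ) → ℝ) : Prop :=
  molNorm p p₀ r m₀ M ≠ ∞ ∧
  ∀ β : Fin n → ℕ, (∑ i, β i) ≤ d →
    Summable (fun j : Fin n → ℤ => |(∏ i, ((j i : ℝ)) ^ β i) * M j|) ∧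
    ∑' j : Fin n → ℤ, (∏ i, ((j i : ℝ)) ^ β i) * M j = 0

/-- The discrete Riesz transform `(R_s^d b)(m) = ∑_{j ≠ m} b(j)(m_s − j_s)/|m−j|^{n+1}`. -/
noncomputable def rieszT {n : ℕ} (s : Fin n) (b : (Fin n → ℤ) → ℝ) (m : Fin n → ℤ) : ℝ :=
  ∑' j : Fin n → ℤ, if j = m then 0 else b j * ((m s - j s : ℤ) : ℝ) / znorm (m - j) ^ (n+1)

/-- The discrete Hardy space quasi-norm: for `u ≤ 1` the Riesz-transform characterization
`‖b‖_{H^u} = ‖b‖_{ℓ^u} + ∑_s ‖R_s^d b‖_{ℓ^u}`; for `u > 1`, `H^u = ℓ^u`. -/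
noncomputable def hardyNorm {n : ℕ} (u : ℝ) (b : (Fin n → ℤ) → ℝ) : ℝ≥0∞ :=
  if u ≤ 1 then ellNormF u b + ∑ s : Fin n, ellNormF u (rieszT s b)
  else ellNormF u b

/-- The discrete Riesz potential `(I_α b)(j) = ∑_{i ≠ j} b(i)/|i−j|^{n−α}`. -/
noncomputable def rieszPot {n : ℕ} (α : ℝ) (b : (Fin n → ℤ) → ℝ) (j : Fin n → ℤ) : ℝ :=
  ∑' i : Fin n → ℤ, if i = j then 0 else b i / znorm (i - j) ^ ((n : ℝ) - α)

lemma ellNorm_le_mul {n : ℕ} (p₀ : ℝ≥0∞) (hp₀ : p₀ ≠ 0) (c : ℝ≥0∞)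
    (f g : (Fin n → ℤ) → ℝ)
    (h : ∀ j, (‖f j‖₊ : ℝ≥0∞) ≤ c * ‖g j‖₊) :
    ellNorm p₀ f ≤ c * ellNorm p₀ g := by
  unfold ellNorm
  split_ifs with htop
  · rw [ENNReal.mul_iSup]
    exact iSup_le fun j => le_iSup_of_le j (h j)
  · have hs0 : 0 < p₀.toReal := ENNReal.toReal_pos hp₀ htop
    set s := p₀.toReal with hs
    unfold ellNormF
    have h1 : ∀ j, (‖f j‖₊ : ℝ≥0∞) ^ s ≤ c ^ s * (‖g j‖₊:ℝ≥0∞) ^ s := fun j => by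
      rw [← ENNReal.mul_rpow_of_nonneg _ _ hs0.le]
      exact ENNReal.rpow_le_rpow (h j) hs0.le
    calc (∑' j, (‖f j‖₊:ℝ≥0∞) ^ s) ^ (1/s)
        ≤ (∑' j, c ^ s * (‖g j‖₊:ℝ≥0∞) ^ s) ^ (1/s) :=
          ENNReal.rpow_le_rpow (ENNReal.tsum_le_tsum h1) (by positivity)
      _ = (c ^ s) ^ (1/s) * (∑' j, (‖g j‖₊:ℝ≥0∞) ^ s) ^ (1/s) := by
          rw [ENNReal.tsum_mul_left, ENNReal.mul_rpow_of_nonneg _ _ (by positivity)]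
      _ = c * (∑' j, (‖g j‖₊:ℝ≥0∞) ^ s) ^ (1/s) := by
          rw [← ENNReal.rpow_mul, mul_one_div, div_self hs0.ne', ENNReal.rpow_one]


/-- Every `(p, p₀, L)`-atom centered at a discrete cube `Q` is a
`(p, p₀, r, d_p)`-molecule centered at each `m₀ ∈ Q`, with molecule norm bounded by a
constant depending only on `n, p, p₀, r, L`. -/
theorem atom_is_molecule (n : ℕ) (hn : 1 ≤ n) (p : ℝ) (p₀ : ℝ≥0∞) (hp0 : 0 < p) (hp1 : p ≤ 1)
    (hp₀ : 1 < p₀) (L : ℕ) (hL : dp n p ≤ L) (r : ℝ) (hr : 1/p - 1/p₀.toReal < r) :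
    ∃ C : ℝ≥0, 0 < C ∧
      ∀ (m₀' : Fin n → ℤ) (N : ℕ) (a : (Fin n → ℤ) → ℝ),
        IsDiscreteAtom p p₀ L m₀' N a →
        ∀ m₀ : Fin n → ℤ, (∀ i, |m₀ i - m₀' i| ≤ (N : ℤ)) →
          IsDiscreteMolecule p p₀ r (dp n p) m₀ a ∧ molNorm p p₀ r m₀ a ≤ (C : ℝ≥0∞) := by
  classical
  have hp₀0 : p₀ ≠ 0 := (lt_trans zero_lt_one hp₀).ne'
  have hinv : 1/p₀.toReal < 1/p := by
    rcases eq_or_ne p₀ ∞ with h | h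
    · rw [h]; simp; positivity
    · have h1 : 1 < p₀.toReal := by
        rw [← ENNReal.toReal_one]
        exact (ENNReal.toReal_lt_toReal (by simp) h).mpr hp₀
      have h2 : 1/p₀.toReal < 1 := by
        rw [div_lt_one (lt_trans one_pos h1)]; exact h1
      have h3 : (1:ℝ) ≤ 1/p := by rw [le_div_iff₀ hp0]; linarith
      linarith
  set e : ℝ := 1/p - 1/p₀.toReal with he
  have he0 : 0 < e := sub_pos.mpr hinv
  have hr0 : 0 < r := lt_trans he0 hr
  set θ : ℝ := e / r with hθ
  have hθ0 : 0 < θ := div_pos he0 hr0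
  have hθ1 : θ < 1 := (div_lt_one hr0).mpr hr
  have hn0 : (0:ℝ) < Real.sqrt n :=
    Real.sqrt_pos.mpr (by exact_mod_cast Nat.lt_of_lt_of_le Nat.zero_lt_one hn)
  set c₀ : ℝ := (Real.sqrt n) ^ ((n:ℝ)*r) with hc₀
  have hc₀pos : 0 < c₀ := Real.rpow_pos_of_pos hn0 _
  refine ⟨c₀.toNNReal ^ θ, ?_, ?_⟩
  · exact NNReal.rpow_pos (by simpa using hc₀pos)
  intro m₀' N a ha m₀ hm₀
  obtain ⟨hsupp, hA, hmom⟩ := ha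
  set K : ℝ≥0∞ := (((2*N+1)^n : ℕ) : ℝ≥0∞) with hK
  have hKn : 1 ≤ (2*N+1)^n := Nat.one_le_pow _ _ (by omega)
  have hK0 : K ≠ 0 := by
    simp only [hK, ne_eq, Nat.cast_eq_zero]
    omega
  have hKtop : K ≠ ∞ := by rw [hK]; exact ENNReal.natCast_ne_top _
  -- pointwise bound
  have hpt : ∀ j, (‖znorm (j - m₀) ^ ((n:ℝ)*r) * a j‖₊ : ℝ≥0∞)
      ≤ (ENNReal.ofReal c₀ * K ^ r) * ‖a j‖₊ := by
    intro j
    by_cases hj : a j = 0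
    · simp [hj]
    · have hjQ : ∀ i, |j i - m₀' i| ≤ (N:ℤ) := by
        by_contra hc
        push_neg at hc
        exact hj (hsupp j (by push_neg; exact hc))
      have hz : znorm (j - m₀) ≤ Real.sqrt n * (2*N+1) := by
        have hb : ∀ i, (((j - m₀) i : ℤ):ℝ)^2 ≤ ((2*(N:ℝ)+1))^2 := by
          intro i
          have h1 : |j i - m₀ i| ≤ (2*(N:ℤ)+1) := by
            have t1 := abs_sub_le (j i) (m₀' i) (m₀ i)
            have t2 := hjQ i
            have t3 := hm₀ i
            have t4 : |m₀' i - m₀ i| = |m₀ i - m₀' i| := abs_sub_comm _ _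
            linarith [t1, t2, t3]
          have h1' : |((j i - m₀ i : ℤ):ℝ)| ≤ (2*(N:ℝ)+1) := by
            rw [← Int.cast_abs]
            exact_mod_cast h1
          have := abs_le.mp h1'
          have := sq_le_sq' this.1 this.2
          simpa using this
        unfold znorm
        have hsum : ∑ i, (((j - m₀) i : ℤ):ℝ)^2 ≤ (n:ℝ) * (2*(N:ℝ)+1)^2 := by
          calc ∑ i, (((j - m₀) i : ℤ):ℝ)^2 ≤ ∑ _i : Fin n, (2*(N:ℝ)+1)^2 :=
              Finset.sum_le_sum (fun i _ => hb i)
            _ = (n:ℝ) * (2*(N:ℝ)+1)^2 := by simp [Finset.sum_const, mul_comm]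
        calc Real.sqrt (∑ i, (((j - m₀) i : ℤ):ℝ)^2)
            ≤ Real.sqrt ((n:ℝ) * (2*(N:ℝ)+1)^2) := Real.sqrt_le_sqrt hsum
          _ = Real.sqrt n * (2*(N:ℝ)+1) := by
              rw [Real.sqrt_mul (by positivity), Real.sqrt_sq (by positivity)]
      have hz2 : znorm (j - m₀) ^ ((n:ℝ)*r) ≤ c₀ * (2*(N:ℝ)+1) ^ ((n:ℝ)*r) := by
        have hnn : 0 ≤ znorm (j - m₀) := Real.sqrt_nonneg _
        calc znorm (j-m₀) ^ ((n:ℝ)*r) ≤ (Real.sqrt n * (2*(N:ℝ)+1)) ^ ((n:ℝ)*r) :=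
            Real.rpow_le_rpow hnn hz (by positivity)
          _ = c₀ * (2*(N:ℝ)+1) ^ ((n:ℝ)*r) := Real.mul_rpow (Real.sqrt_nonneg _) (by positivity)
      have hKr : ENNReal.ofReal ((2*(N:ℝ)+1) ^ ((n:ℝ)*r)) = K ^ r := by
        rw [← ENNReal.ofReal_rpow_of_pos (by positivity)]
        have : ENNReal.ofReal (2*(N:ℝ)+1) = ((2*N+1 : ℕ) : ℝ≥0∞) := by
          rw [show (2*(N:ℝ)+1) = ((2*N+1 : ℕ):ℝ) by push_cast; ring, ENNReal.ofReal_natCast]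
        rw [this, hK]
        rw [show (((2*N+1)^n : ℕ) : ℝ≥0∞) = ((2*N+1:ℕ) : ℝ≥0∞)^n by push_cast; ring]
        rw [← ENNReal.rpow_natCast ((2*N+1:ℕ) : ℝ≥0∞) n, ← ENNReal.rpow_mul]
      rw [nnnorm_mul, ENNReal.coe_mul]
      refine mul_le_mul_left ?_ _
      rw [show ((‖znorm (j - m₀) ^ ((n:ℝ)*r)‖₊ : ℝ≥0∞)) =
        ENNReal.ofReal (znorm (j - m₀) ^ ((n:ℝ)*r)) from
          (Real.enorm_eq_ofReal (Real.rpow_nonneg (Real.sqrt_nonneg _) _))]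
      calc ENNReal.ofReal (znorm (j - m₀) ^ ((n:ℝ)*r))
          ≤ ENNReal.ofReal (c₀ * (2*(N:ℝ)+1) ^ ((n:ℝ)*r)) := ENNReal.ofReal_le_ofReal hz2
        _ = ENNReal.ofReal c₀ * K ^ r := by rw [ENNReal.ofReal_mul hc₀pos.le, hKr]
  have hA' : ellNorm p₀ a ≤ K ^ (-e) := by
    have hee : 1/p₀.toReal - 1/p = -e := by rw [he]; ring
    rw [← hee]
    exact hA
  set c₀e : ℝ≥0∞ := ENNReal.ofReal c₀ with hc₀e
  have hB : ellNorm p₀ (fun j => znorm (j - m₀) ^ ((n:ℝ)*r) * a j) ≤ c₀e * K ^ (r - e) := by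
    calc ellNorm p₀ (fun j => znorm (j - m₀) ^ ((n:ℝ)*r) * a j)
        ≤ (c₀e * K^r) * ellNorm p₀ a := ellNorm_le_mul p₀ hp₀0 _ _ _ hpt
      _ ≤ (c₀e * K^r) * K^(-e) := mul_le_mul_right hA' _
      _ = c₀e * K^(r - e) := by
          rw [mul_assoc, ← ENNReal.rpow_add _ _ hK0 hKtop]
          ring_nf
  have hCcoe : ((c₀.toNNReal ^ θ : ℝ≥0) : ℝ≥0∞) = c₀e ^ θ := by
    rw [ENNReal.coe_rpow_of_nonneg _ hθ0.le, hc₀e, ENNReal.ofReal]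
  have hmol : molNorm p p₀ r m₀ a ≤ ((c₀.toNNReal ^ θ : ℝ≥0) : ℝ≥0∞) := by
    rw [hCcoe]
    unfold molNorm
    rw [← he, ← hθ]
    calc ellNorm p₀ a ^ (1 - θ) *
        ellNorm p₀ (fun j => znorm (j - m₀) ^ ((n:ℝ)*r) * a j) ^ θ
        ≤ (K ^ (-e)) ^ (1 - θ) * (c₀e * K ^ (r - e)) ^ θ :=
          mul_le_mul' (ENNReal.rpow_le_rpow hA' (by linarith))
            (ENNReal.rpow_le_rpow hB hθ0.le)
      _ = K ^ (-e*(1-θ)) * (c₀e ^ θ * K ^ ((r-e)*θ)) := by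
          rw [ENNReal.mul_rpow_of_nonneg _ _ hθ0.le, ← ENNReal.rpow_mul, ← ENNReal.rpow_mul]
      _ = c₀e ^ θ * K ^ (-e*(1-θ) + (r-e)*θ) := by
          rw [ENNReal.rpow_add _ _ hK0 hKtop]; ring
      _ = c₀e ^ θ := by
          have : -e*(1-θ) + (r-e)*θ = 0 := by
            have : θ * r = e := by rw [hθ]; field_simp
            nlinarith [this]
          rw [this, ENNReal.rpow_zero, mul_one]
  refine ⟨⟨?_, ?_⟩, hmol⟩
  · exact ne_top_of_le_ne_top ENNReal.coe_ne_top hmol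
  · intro β hβ
    constructor
    · apply summable_of_ne_finset_zero
        (s := Fintype.piFinset (fun i => Finset.Icc (m₀' i - N) (m₀' i + N)))
      intro j hj
      have hz : a j = 0 := by
        apply hsupp
        intro h
        apply hj
        rw [Fintype.mem_piFinset]
        intro i
        rw [Finset.mem_Icc]
        have := abs_le.mp (h i)
        constructor <;> linarith [this.1, this.2]
      simp [hz]
    · exact hmom β (le_trans hβ hL)
end

section
/- Let n ≥ 1, 0 < p ≤ 1 < p₀ ≤ ∞ and r > 1/p − 1/p₀. Then there exists a constant C > 0, depending only on n, p, p₀ and r, such that for every M : ℤⁿ → ℝ with ‖ |·|^{nr} M ‖_{ℓ^{p₀}} < ∞ and ∑_{j ∈ ℤⁿ} M(j) = 0 (the series converging absolutely), one has ‖M‖_{ℓ^p(ℤⁿ)} ≤ C · ‖ |·|^{nr} M ‖_{ℓ^{p₀}(ℤⁿ)}. -/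
open scoped ENNReal NNReal BigOperators
open Filter

lemma my_pseries {t : ℝ} (ht : t < -1) :
    ∑' k : ℕ, (((k+1 : ℕ) : ℝ≥0∞)) ^ t ≠ ∞ := by
  have hsum : Summable fun k : ℕ => (((k+1 : ℕ) : ℝ≥0)) ^ t := by
    rw [← NNReal.summable_coe]
    have : Summable fun k : ℕ => ((k+1 : ℕ) : ℝ) ^ t := by
      have := Real.summable_nat_rpow.2 ht
      exact (summable_nat_add_iff 1).2 this
    simpa [NNReal.coe_rpow] using this
  have : ∀ k : ℕ, (((k+1 : ℕ) : ℝ≥0∞)) ^ t = ((((k+1:ℕ) : ℝ≥0)) ^ t : ℝ≥0) := by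
    intro k
    rw [ENNReal.coe_rpow_of_ne_zero (by positivity)]
    norm_num
  rw [tsum_congr this]
  exact ENNReal.tsum_coe_ne_top_iff_summable.2 hsum

lemma my_pow_aux (b c m : ℕ) : (b+c)^(m+1) ≤ (m+1)*c*(b+c)^m + b^(m+1) := by
  induction m with
  | zero => simp [pow_succ]; omega
  | succ m ih =>
    have h2 : (b+c) * (b+c)^(m+1) ≤ (b+c) * ((m+1)*c*(b+c)^m + b^(m+1)) :=
      Nat.mul_le_mul_left _ ih
    have h3 : (b+c) * ((m+1)*c*(b+c)^m + b^(m+1))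
        = (m+1)*c*(b+c)^(m+1) + c*b^(m+1) + b^(m+2) := by ring
    have h4 : c*b^(m+1) ≤ c*(b+c)^(m+1) :=
      Nat.mul_le_mul_left _ (Nat.pow_le_pow_left (by omega) _)
    calc (b+c)^(m+2) = (b+c) * (b+c)^(m+1) := by ring
      _ ≤ (m+1)*c*(b+c)^(m+1) + c*b^(m+1) + b^(m+2) := by omega
      _ ≤ (m+1)*c*(b+c)^(m+1) + c*(b+c)^(m+1) + b^(m+2) := by omega
      _ = (m+2)*c*(b+c)^(m+1) + b^(m+2) := by ring

lemma abs_le_znorm {n : ℕ} (j : Fin n → ℤ) (i : Fin n) : |(j i : ℝ)| ≤ znorm j := by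
  unfold znorm
  rw [← Real.sqrt_sq_eq_abs]
  exact Real.sqrt_le_sqrt (Finset.single_le_sum (f := fun i => ((j i:ℝ))^2)
    (fun i _ => sq_nonneg _) (Finset.mem_univ i))

lemma one_le_znorm {n : ℕ} {j : Fin n → ℤ} (hj : j ≠ 0) : 1 ≤ znorm j := by
  obtain ⟨i, hi⟩ := Function.ne_iff.1 hj
  have h1 : (1:ℝ) ≤ |(j i : ℝ)| := by
    have : 1 ≤ |j i| := Int.one_le_abs (by simpa using hi)
    calc (1:ℝ) = ((1:ℤ):ℝ) := by norm_num
      _ ≤ (|j i| : ℝ) := by exact_mod_cast this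
      _ = |(j i : ℝ)| := by push_cast; ring
  exact h1.trans (abs_le_znorm j i)

/-- The neg-power rpow is antitone on positives. -/
lemma my_rpow_neg_anti {x y : ℝ≥0∞} (hx : x ≠ 0) (hxy : x ≤ y) {s : ℝ} (hs : 0 ≤ s) :
    y ^ (-s) ≤ x ^ (-s) := by
  rw [ENNReal.rpow_neg, ENNReal.rpow_neg]
  exact ENNReal.inv_le_inv.2 (ENNReal.rpow_le_rpow hxy hs)

lemma latticeSum (n : ℕ) (hn : 1 ≤ n) {s : ℝ} (hs : (n:ℝ) < s) :
    ∑' j : Fin n → ℤ, (if j = 0 then 0 else ENNReal.ofReal (znorm j) ^ (-s)) ≠ ∞ := by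
  have hs0 : 0 ≤ s := le_trans (by exact_mod_cast Nat.zero_le n) hs.le
  classical
  set K : (Fin n → ℤ) → ℕ := fun j => Finset.univ.sup fun i => (j i).natAbs with hK
  -- pointwise bound by max-norm
  have hpt : ∀ j : Fin n → ℤ,
      (if j = 0 then 0 else ENNReal.ofReal (znorm j) ^ (-s)) ≤
      (if j = 0 then 0 else ((K j : ℕ) : ℝ≥0∞) ^ (-s)) := by
    intro j
    by_cases hj : j = 0
    · simp [hj]
    · simp only [hj, if_false]
      have hne : (Finset.univ : Finset (Fin n)).Nonempty :=
        ⟨⟨0, by omega⟩, Finset.mem_univ _⟩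
      obtain ⟨i, -, hi⟩ := Finset.exists_mem_eq_sup Finset.univ hne
        (fun i => (j i).natAbs)
      have hcast : ((K j : ℕ) : ℝ) ≤ znorm j := by
        rw [hK]; simp only []
        rw [hi]
        calc (((j i).natAbs : ℕ) : ℝ) = |(j i : ℝ)| := by
              rw [Nat.cast_natAbs]; push_cast; ring
          _ ≤ znorm j := abs_le_znorm j i
      have hKle : ((K j : ℕ) : ℝ≥0∞) ≤ ENNReal.ofReal (znorm j) := by
        rw [← ENNReal.ofReal_natCast]
        exact ENNReal.ofReal_le_ofReal hcast
      have hK1 : 1 ≤ K j := by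
        obtain ⟨i', hi'⟩ := Function.ne_iff.1 hj
        have hi0 : j i' ≠ 0 := by simpa using hi'
        have h1 : 1 ≤ (j i').natAbs := by omega
        exact le_trans h1 (Finset.le_sup (f := fun i => (j i).natAbs) (Finset.mem_univ i'))
      have hKne : ((K j : ℕ) : ℝ≥0∞) ≠ 0 := by
        simp only [ne_eq, Nat.cast_eq_zero]; omega
      exact my_rpow_neg_anti hKne hKle hs0
  refine ne_top_of_le_ne_top ?_ (ENNReal.tsum_le_tsum hpt)
  -- layer decomposition
  set t : ℕ → (Fin n → ℤ) → ℝ≥0∞ :=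
    fun k j => if K j = k + 1 then (((k+1 : ℕ)) : ℝ≥0∞) ^ (-s) else 0 with ht
  have hlayer : ∀ j : Fin n → ℤ,
      (if j = 0 then 0 else ((K j : ℕ) : ℝ≥0∞) ^ (-s)) ≤ ∑' k, t k j := by
    intro j
    by_cases hj : j = 0
    · simp [hj]
    · have hK1 : 1 ≤ K j := by
        obtain ⟨i', hi'⟩ := Function.ne_iff.1 hj
        have hi0 : j i' ≠ 0 := by simpa using hi'
        have h1 : 1 ≤ (j i').natAbs := by omega
        exact le_trans h1 (Finset.le_sup (f := fun i => (j i).natAbs) (Finset.mem_univ i'))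
      have h5 : K j - 1 + 1 = K j := by omega
      have : t (K j - 1) j = ((K j : ℕ) : ℝ≥0∞) ^ (-s) := by
        rw [ht]; simp only []
        rw [h5, if_pos rfl]
      simp only [hj, if_false]
      rw [← this]
      exact ENNReal.le_tsum _
  refine ne_top_of_le_ne_top ?_ ((ENNReal.tsum_le_tsum hlayer).trans ENNReal.tsum_comm.le)
  -- bound each layer
  set B : ℕ → Finset (Fin n → ℤ) := fun m => Fintype.piFinset fun _ => Finset.Icc (-(m:ℤ)) m
    with hB
  have hmemB : ∀ (m : ℕ) (j : Fin n → ℤ), j ∈ B m ↔ K j ≤ m := by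
    intro m j
    rw [hB]; simp only [Fintype.mem_piFinset, Finset.mem_Icc]
    rw [hK]; simp only [Finset.sup_le_iff, Finset.mem_univ, true_implies]
    exact forall_congr' fun i => by omega
  have hcardB : ∀ m : ℕ, (B m).card = (2*m+1)^n := by
    intro m
    rw [hB]; rw [Fintype.card_piFinset]
    simp [Int.card_Icc]
    congr 1
    omega
  have hlayerbound : ∀ k : ℕ, (∑' j : Fin n → ℤ, t k j) ≤
      ((2*n*5^(n-1) : ℕ) : ℝ≥0∞) * (((k+1:ℕ)) : ℝ≥0∞) ^ ((n-1 : ℕ) + (-s) : ℝ) := by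
    intro k
    have hsub : B k ⊆ B (k+1) := by
      intro j hj
      rw [hmemB] at *
      omega
    have hzero : ∀ j ∉ B (k+1) \ B k, t k j = 0 := by
      intro j hj
      rw [Finset.mem_sdiff, hmemB, hmemB] at hj
      rw [ht]; simp only []
      rw [if_neg]; omega
    rw [tsum_eq_sum hzero]
    have hterm : ∀ j ∈ B (k+1) \ B k, t k j ≤ (((k+1:ℕ)) : ℝ≥0∞) ^ (-s) := by
      intro j _
      rw [ht]; simp only []
      split
      · exact le_refl _
      · exact zero_le
    refine le_trans (Finset.sum_le_card_nsmul _ _ _ hterm) ?_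
    rw [Finset.card_sdiff_of_subset hsub, hcardB, hcardB, nsmul_eq_mul]
    have hcard : (2*(k+1)+1)^n - (2*k+1)^n ≤ 2*n*5^(n-1)*(k+1)^(n-1) := by
      obtain ⟨m, rfl⟩ : ∃ m, n = m + 1 := ⟨n - 1, by omega⟩
      have h1 := my_pow_aux (2*k+1) 2 m
      have h2 : (2*k+1+2)^m ≤ (5*(k+1))^m := Nat.pow_le_pow_left (by omega) m
      have h3 : (5*(k+1))^m = 5^m * (k+1)^m := by rw [mul_pow]
      have : 2*(k+1)+1 = 2*k+1+2 := by omega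
      rw [this]
      calc (2*k+1+2)^(m+1) - (2*k+1)^(m+1) ≤ (m+1)*2*(2*k+1+2)^m := by omega
        _ ≤ (m+1)*2*(5^m*(k+1)^m) := by
            refine Nat.mul_le_mul_left _ ?_
            omega
        _ = 2*(m+1)*5^((m+1)-1)*(k+1)^((m+1)-1) := by
            simp only [Nat.add_sub_cancel]; ring
    calc ((2*(k+1)+1)^n - (2*k+1)^n : ℕ) * (((k+1:ℕ)) : ℝ≥0∞) ^ (-s)
        ≤ ((2*n*5^(n-1)*(k+1)^(n-1) : ℕ) : ℝ≥0∞) * (((k+1:ℕ)) : ℝ≥0∞) ^ (-s) := by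
          exact mul_le_mul_left (by exact_mod_cast hcard) _
      _ = ((2*n*5^(n-1) : ℕ) : ℝ≥0∞) * (((k+1:ℕ)) : ℝ≥0∞) ^ ((n-1 : ℕ) + (-s) : ℝ) := by
          rw [ENNReal.rpow_add _ _ (by positivity) (by simp)]
          push_cast
          rw [ENNReal.rpow_natCast]
          ring
  refine ne_top_of_le_ne_top ?_ (ENNReal.tsum_le_tsum hlayerbound)
  rw [ENNReal.tsum_mul_left]
  refine ENNReal.mul_ne_top (ENNReal.natCast_ne_top _) ?_
  have hlt : ((n-1:ℕ):ℝ) + (-s) < -1 := by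
    have hc : ((n-1:ℕ):ℝ) = (n:ℝ) - 1 := by
      push_cast [Nat.cast_sub hn]
      ring
    rw [hc]
    linarith
  exact my_pseries hlt


lemma my_holder_tsum {ι : Type*} [Countable ι] (f g : ι → ℝ≥0∞) {a b : ℝ}
    (hab : a.HolderConjugate b) :
    ∑' i, f i * g i ≤ (∑' i, f i ^ a) ^ (1/a) * (∑' i, g i ^ b) ^ (1/b) := by
  letI : MeasurableSpace ι := ⊤
  haveI : MeasurableSingletonClass ι := ⟨fun _ => trivial⟩
  have h := ENNReal.lintegral_mul_le_Lp_mul_Lq (MeasureTheory.Measure.count (α := ι)) hab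
    (f := f) (g := g) (measurable_of_countable _).aemeasurable
    (measurable_of_countable _).aemeasurable
  simpa [MeasureTheory.lintegral_count] using h

lemma my_combine {p : ℝ} (hp0 : 0 < p) (X Y W C₁ C₂ : ℝ≥0∞)
    (hX : X ≤ C₁ * W) (hY : Y ≤ C₂ * W ^ p) :
    (X ^ p + Y) ^ (1/p) ≤ (C₁ ^ p + C₂) ^ (1/p) * W := by
  have h1 : X ^ p ≤ C₁ ^ p * W ^ p := by
    calc X ^ p ≤ (C₁ * W) ^ p := ENNReal.rpow_le_rpow hX hp0.le
      _ = C₁ ^ p * W ^ p := ENNReal.mul_rpow_of_nonneg _ _ hp0.le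
  have h2 : X ^ p + Y ≤ (C₁ ^ p + C₂) * W ^ p := by
    rw [add_mul]; exact add_le_add h1 hY
  calc (X ^ p + Y) ^ (1/p) ≤ ((C₁^p + C₂) * W ^ p) ^ (1/p) :=
        ENNReal.rpow_le_rpow h2 (by positivity)
    _ = (C₁^p + C₂)^(1/p) * (W ^ p) ^ (1/p) := ENNReal.mul_rpow_of_nonneg _ _ (by positivity)
    _ = (C₁^p + C₂)^(1/p) * W := by
        rw [← ENNReal.rpow_mul, mul_one_div_cancel hp0.ne', ENNReal.rpow_one]


/-- If `‖|·|^{nr} M‖_{ℓ^{p₀}} < ∞` and `∑_j M(j) = 0` (absolutely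
convergent), then `‖M‖_{ℓ^p} ≤ C ‖|·|^{nr} M‖_{ℓ^{p₀}}` with `C = C(n,p,p₀,r)`. -/
theorem ellp_le_weighted_norm (n : ℕ) (hn : 1 ≤ n) (p : ℝ) (p₀ : ℝ≥0∞) (hp0 : 0 < p)
    (hp1 : p ≤ 1) (hp₀ : 1 < p₀) (r : ℝ) (hr : 1/p - 1/p₀.toReal < r) :
    ∃ C : ℝ≥0, 0 < C ∧
      ∀ M : (Fin n → ℤ) → ℝ,
        ellNorm p₀ (fun j => znorm j ^ ((n : ℝ)*r) * M j) ≠ ∞ →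
        Summable (fun j : Fin n → ℤ => |M j|) →
        (∑' j : Fin n → ℤ, M j) = 0 →
        ellNormF p M ≤ (C : ℝ≥0∞) * ellNorm p₀ (fun j => znorm j ^ ((n : ℝ)*r) * M j) := by
  classical
  have hnR : (0:ℝ) < n := by exact_mod_cast hn
  have h1p : 1 ≤ 1/p := one_le_one_div hp0 hp1
  have hq1 : 1/p₀.toReal < 1 := by
    rcases eq_or_ne p₀ ∞ with h|h
    · simp [h]
    · have h2 : 1 < p₀.toReal := by
        rw [← ENNReal.toReal_one]
        exact (ENNReal.toReal_lt_toReal (by simp) h).2 hp₀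
      rw [one_div]
      exact inv_lt_one_of_one_lt₀ h2
  have hq0 : 0 ≤ 1/p₀.toReal := by positivity
  have hr0 : 0 < r := by linarith
  -- the weight
  set v : (Fin n → ℤ) → ℝ≥0∞ :=
    fun j => if j = 0 then 0 else ENNReal.ofReal (znorm j) ^ (-((n:ℝ)*r)) with hv
  have hvpow : ∀ (c : ℝ), 0 < c → ∀ j, v j ^ c =
      (if j = 0 then 0 else ENNReal.ofReal (znorm j) ^ (-((n:ℝ)*r*c))) := by
    intro c hc j
    by_cases hj : j = 0
    · simp [hv, hj, ENNReal.zero_rpow_of_pos hc]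
    · simp only [hv, hj, if_false]
      rw [← ENNReal.rpow_mul]
      congr 1
      ring
  have hvfin : ∀ c : ℝ, 1 < r * c → (∑' j, v j ^ c) ≠ ∞ := by
    intro c hc
    have hc0 : 0 < c := by nlinarith
    rw [tsum_congr (hvpow c hc0)]
    refine latticeSum n hn ?_
    nlinarith [mul_pos hnR (sub_pos.2 hc)]
  -- the two Hölder-type bounds, uniform in M
  obtain ⟨C₁, C₂, hC₁, hC₂, hbound⟩ :
      ∃ C₁ C₂ : ℝ≥0∞, C₁ ≠ ∞ ∧ C₂ ≠ ∞ ∧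
        ∀ M : (Fin n → ℤ) → ℝ,
          (∑' j, v j * (‖znorm j ^ ((n:ℝ)*r) * M j‖₊ : ℝ≥0∞)) ≤
            C₁ * ellNorm p₀ (fun j => znorm j ^ ((n:ℝ)*r) * M j) ∧
          (∑' j, v j ^ p * (‖znorm j ^ ((n:ℝ)*r) * M j‖₊ : ℝ≥0∞) ^ p) ≤
            C₂ * ellNorm p₀ (fun j => znorm j ^ ((n:ℝ)*r) * M j) ^ p := by
    rcases eq_or_ne p₀ ∞ with rfl|htop
    · -- p₀ = ∞
      have hrp : 1/p < r := by simpa using hr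
      have hr1 : 1 < r := lt_of_le_of_lt h1p hrp
      refine ⟨∑' j, v j, ∑' j, v j ^ p, ?_, ?_, ?_⟩
      · have := hvfin 1 (by linarith)
        simpa [ENNReal.rpow_one] using this
      · exact hvfin p ((div_lt_iff₀ hp0).1 hrp)
      · intro M
        have hWd : ellNorm ∞ (fun j => znorm j ^ ((n:ℝ)*r) * M j) =
            ⨆ j, (‖znorm j ^ ((n:ℝ)*r) * M j‖₊ : ℝ≥0∞) := by
          rw [ellNorm, if_pos rfl]
        constructor
        · rw [hWd]
          calc ∑' j, v j * (‖znorm j ^ ((n:ℝ)*r) * M j‖₊ : ℝ≥0∞)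
              ≤ ∑' j, v j * (⨆ i, (‖znorm i ^ ((n:ℝ)*r) * M i‖₊ : ℝ≥0∞)) :=
                ENNReal.tsum_le_tsum fun j => mul_le_mul_right
                  (le_iSup (fun i => (‖znorm i ^ ((n:ℝ)*r) * M i‖₊ : ℝ≥0∞)) j) _
            _ = (∑' j, v j) * ⨆ i, (‖znorm i ^ ((n:ℝ)*r) * M i‖₊ : ℝ≥0∞) :=
                ENNReal.tsum_mul_right
        · rw [hWd]
          calc ∑' j, v j ^ p * (‖znorm j ^ ((n:ℝ)*r) * M j‖₊ : ℝ≥0∞) ^ p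
              ≤ ∑' j, v j ^ p * (⨆ i, (‖znorm i ^ ((n:ℝ)*r) * M i‖₊ : ℝ≥0∞)) ^ p :=
                ENNReal.tsum_le_tsum fun j => mul_le_mul_right
                  (ENNReal.rpow_le_rpow
                    (le_iSup (fun i => (‖znorm i ^ ((n:ℝ)*r) * M i‖₊ : ℝ≥0∞)) j) hp0.le) _
            _ = (∑' j, v j ^ p) * (⨆ i, (‖znorm i ^ ((n:ℝ)*r) * M i‖₊ : ℝ≥0∞)) ^ p :=
                ENNReal.tsum_mul_right
    · -- p₀ finite
      set q₀ := p₀.toReal with hq₀def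
      have hq₀1 : 1 < q₀ := by
        rw [hq₀def, ← ENNReal.toReal_one]
        exact (ENNReal.toReal_lt_toReal (by simp) htop).2 hp₀
      have hq₀0 : 0 < q₀ := lt_trans one_pos hq₀1
      have hWd : ∀ b : (Fin n → ℤ) → ℝ, ellNorm p₀ b =
          (∑' j, ((‖b j‖₊ : ℝ≥0∞)) ^ q₀) ^ (1/q₀) := by
        intro b
        rw [ellNorm, if_neg htop]
        rfl
      set b₁ := q₀.conjExponent with hb₁def
      have hc₁ : q₀.HolderConjugate b₁ := Real.HolderConjugate.conjExponent hq₀1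
      have hb₁pos : 0 < b₁ := hc₁.symm.pos
      have hb₁inv : 1/b₁ = 1 - 1/q₀ := by
        have h := hc₁.inv_add_inv_eq_one
        rw [one_div, one_div]
        linarith
      have hrb₁ : 1 < r * b₁ := by
        rw [← div_lt_iff₀ hb₁pos, hb₁inv]
        linarith
      set a₂ := q₀ / p with ha₂def
      have ha₂1 : 1 < a₂ := (one_lt_div hp0).2 (lt_of_le_of_lt hp1 hq₀1)
      set b₂ := a₂.conjExponent with hb₂def
      have hc₂ : a₂.HolderConjugate b₂ := Real.HolderConjugate.conjExponent ha₂1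
      have hb₂pos : 0 < b₂ := hc₂.symm.pos
      have ha₂inv : a₂⁻¹ = p/q₀ := by rw [ha₂def, inv_div]
      have hb₂inv : b₂⁻¹ = 1 - p/q₀ := by
        have h := hc₂.inv_add_inv_eq_one
        rw [← ha₂inv]
        linarith
      have hpb₂ : 1/(p*b₂) = 1/p - 1/q₀ := by
        rw [one_div, mul_inv, hb₂inv]
        field_simp
      have hrpb₂ : 1 < r * (p * b₂) := by
        rw [← div_lt_iff₀ (mul_pos hp0 hb₂pos), hpb₂]
        exact hr
      have hpa₂ : p * a₂ = q₀ := by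
        rw [ha₂def]
        field_simp
      have h1a₂ : 1/a₂ = (1/q₀) * p := by
        rw [ha₂def, one_div_div]
        ring
      refine ⟨(∑' j, v j ^ b₁) ^ (1/b₁), (∑' j, v j ^ (p*b₂)) ^ (1/b₂), ?_, ?_, ?_⟩
      · exact ENNReal.rpow_ne_top_of_nonneg (by positivity) (hvfin b₁ hrb₁)
      · exact ENNReal.rpow_ne_top_of_nonneg (by positivity) (hvfin (p*b₂) hrpb₂)
      · intro M
        rw [hWd]
        constructor
        · exact my_holder_tsum v _ hc₁.symm
        · have h := my_holder_tsum (fun j => v j ^ p)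
            (fun j => (‖znorm j ^ ((n:ℝ)*r) * M j‖₊ : ℝ≥0∞) ^ p) hc₂.symm
          refine h.trans (le_of_eq ?_)
          congr 1
          · congr 1
            apply tsum_congr
            intro j
            rw [← ENNReal.rpow_mul]
          · rw [← ENNReal.rpow_mul]
            rw [← h1a₂]
            congr 1
            apply tsum_congr
            intro j
            rw [← ENNReal.rpow_mul, hpa₂]
  -- the constant
  set D : ℝ≥0∞ := (C₁ ^ p + C₂) ^ (1/p) with hD
  have hDfin : D ≠ ∞ := ENNReal.rpow_ne_top_of_nonneg (by positivity)
    (ENNReal.add_ne_top.2 ⟨ENNReal.rpow_ne_top_of_nonneg hp0.le hC₁, hC₂⟩)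
  refine ⟨D.toNNReal + 1, by positivity, ?_⟩
  have hDle : D ≤ ((D.toNNReal + 1 : ℝ≥0) : ℝ≥0∞) := by
    rw [← ENNReal.coe_toNNReal hDfin]
    exact_mod_cast le_add_right le_rfl
  intro M hW hsum htsum
  obtain ⟨h₁, h₂⟩ := hbound M
  -- pointwise identity
  have hFg : ∀ j : Fin n → ℤ, j ≠ 0 →
      v j * (‖znorm j ^ ((n:ℝ)*r) * M j‖₊ : ℝ≥0∞) = (‖M j‖₊ : ℝ≥0∞) := by
    intro j hj
    have hz1 : 1 ≤ znorm j := one_le_znorm hj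
    have hz0 : 0 < znorm j := lt_of_lt_of_le one_pos hz1
    have hxne : ENNReal.ofReal (znorm j) ≠ 0 := (ENNReal.ofReal_pos.2 hz0).ne'
    have hsplit : (‖znorm j ^ ((n:ℝ)*r) * M j‖₊ : ℝ≥0∞)
        = ENNReal.ofReal (znorm j) ^ ((n:ℝ)*r) * (‖M j‖₊ : ℝ≥0∞) := by
      rw [nnnorm_mul, ENNReal.coe_mul]
      congr 1
      rw [ENNReal.ofReal_rpow_of_pos hz0]
      rw [← enorm_eq_nnnorm, Real.enorm_eq_ofReal (by positivity)]
    rw [hsplit, hv]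
    simp only [hj, if_false]
    rw [← mul_assoc, ← ENNReal.rpow_add _ _ hxne ENNReal.ofReal_ne_top]
    rw [neg_add_cancel, ENNReal.rpow_zero, one_mul]
  -- bound on the central term from the cancellation condition
  have hsumM : Summable M := summable_abs_iff.1 hsum
  have hdec := Summable.tsum_eq_add_tsum_ite hsumM 0
  rw [htsum] at hdec
  have hM0 : M 0 = - ∑' j, ite (j = (0 : Fin n → ℤ)) 0 (M j) := by linarith
  have hsumIteAbs : Summable (fun j : Fin n → ℤ => |ite (j = 0) (0:ℝ) (M j)|) := by
    refine Summable.of_nonneg_of_le (fun _ => abs_nonneg _) (fun j => ?_) hsum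
    by_cases h : j = 0 <;> simp [h]
  have habs : |M 0| ≤ ∑' j, |ite (j = 0) (0:ℝ) (M j)| := by
    rw [hM0, abs_neg]
    have := norm_tsum_le_tsum_norm (f := fun j : Fin n → ℤ => ite (j = 0) (0:ℝ) (M j))
      (by simpa [Real.norm_eq_abs] using hsumIteAbs)
    simpa [Real.norm_eq_abs] using this
  have hF0 : (‖M 0‖₊ : ℝ≥0∞) ≤
      ∑' j, v j * (‖znorm j ^ ((n:ℝ)*r) * M j‖₊ : ℝ≥0∞) := by
    calc (‖M 0‖₊ : ℝ≥0∞) = ENNReal.ofReal |M 0| := Real.enorm_eq_ofReal_abs _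
      _ ≤ ENNReal.ofReal (∑' j, |ite (j = 0) (0:ℝ) (M j)|) := ENNReal.ofReal_le_ofReal habs
      _ = ∑' j, ENNReal.ofReal (|ite (j = 0) (0:ℝ) (M j)|) :=
          ENNReal.ofReal_tsum_of_nonneg (fun _ => abs_nonneg _) hsumIteAbs
      _ = ∑' j, v j * (‖znorm j ^ ((n:ℝ)*r) * M j‖₊ : ℝ≥0∞) := by
          apply tsum_congr
          intro j
          by_cases h : j = 0
          · simp [h, hv]
          · rw [hFg j h]
            rw [if_neg h, ← enorm_eq_nnnorm, Real.enorm_eq_ofReal_abs]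
  -- main decomposition
  have hkey : ∑' j, ((‖M j‖₊ : ℝ≥0∞)) ^ p =
      (‖M 0‖₊ : ℝ≥0∞) ^ p +
        ∑' j, v j ^ p * (‖znorm j ^ ((n:ℝ)*r) * M j‖₊ : ℝ≥0∞) ^ p := by
    rw [ENNReal.tsum_eq_add_tsum_ite (f := fun j => ((‖M j‖₊ : ℝ≥0∞)) ^ p) 0]
    congr 1
    apply tsum_congr
    intro j
    by_cases h : j = 0
    · simp [h, hv, ENNReal.zero_rpow_of_pos hp0]
    · rw [if_neg h, ← hFg j h, ENNReal.mul_rpow_of_nonneg _ _ hp0.le]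
  show (∑' j, ((‖M j‖₊ : ℝ≥0∞)) ^ p) ^ (1/p) ≤ _
  rw [hkey]
  calc ((‖M 0‖₊ : ℝ≥0∞) ^ p +
        ∑' j, v j ^ p * (‖znorm j ^ ((n:ℝ)*r) * M j‖₊ : ℝ≥0∞) ^ p) ^ (1/p)
      ≤ (C₁ ^ p + C₂) ^ (1/p) * ellNorm p₀ (fun j => znorm j ^ ((n:ℝ)*r) * M j) :=
        my_combine hp0 _ _ _ _ _ (hF0.trans h₁) h₂
    _ ≤ ((D.toNNReal + 1 : ℝ≥0) : ℝ≥0∞) * ellNorm p₀ (fun j => znorm j ^ ((n:ℝ)*r) * M j) :=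
        mul_le_mul_left hDle _
end
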